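/- Let n and m be coprime positive integers. Denote by x, y, z the residue classes of the variable in the quotient ℚ-algebras A = ℚ[X]/(X^n − 1), B = ℚ[X]/(X^m − 1), and C = ℚ[X]/(X^{nm} − 1) respectively. Then there is a ℚ-algebra homomorphism Φ : A ⊗_ℚ B → C with Φ(x ⊗ 1) = z^m and Φ(1 ⊗ y) = z^n, and any such Φ is bijective. -/

import Mathlib

open Polynomial TensorProduct

lemma pow_eq_pow_of_modEq' {M : Type*} [Monoid M] {x : M} {N a b : ℕ}
    (hx : x ^ N = 1) (hab : a ≡ b [MOD N]) : x ^ a = x ^ b := by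
  have key : ∀ c : ℕ, x ^ c = x ^ (c % N) := fun c => by
    conv_lhs => rw [← Nat.div_add_mod c N]
    rw [pow_add, pow_mul, hx, one_pow, one_mul]
  rw [key a, key b, hab]

lemma bezout_mod' (n m : ℕ) (hn : 0 < n) (hm : 0 < m) (h : Nat.Coprime n m) :
    ∃ a b : ℕ, n * a + m * b ≡ 1 [MOD n * m] := by
  have hb : (n : ℤ) * Nat.gcdA n m + m * Nat.gcdB n m = 1 := by
    have h2 := Nat.gcd_eq_gcd_ab n m
    rw [h] at h2
    push_cast at h2 ⊢
    linarith
  set u := Nat.gcdA n m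
  set v := Nat.gcdB n m
  refine ⟨(u % m).toNat, (v % n).toNat, ?_⟩
  rw [← Int.natCast_modEq_iff]
  have hu : ((u % m).toNat : ℤ) = u % m :=
    Int.toNat_of_nonneg (Int.emod_nonneg _ (by exact_mod_cast hm.ne'))
  have hv : ((v % n).toNat : ℤ) = v % n :=
    Int.toNat_of_nonneg (Int.emod_nonneg _ (by exact_mod_cast hn.ne'))
  push_cast [hu, hv]
  obtain ⟨k1, hk1⟩ : (m : ℤ) ∣ u - u % m := ⟨u / m, by linarith [Int.mul_ediv_add_emod u m]⟩
  obtain ⟨k2, hk2⟩ : (n : ℤ) ∣ v - v % n := ⟨v / n, by linarith [Int.mul_ediv_add_emod v n]⟩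
  refine Int.modEq_iff_dvd.2 ⟨k1 + k2, ?_⟩
  linear_combination (-1 : ℤ) * hb + (n : ℤ) * hk1 + (m : ℤ) * hk2

lemma adjoinRoot_ne' (k : ℕ) (hk : 0 < k) : (X ^ k - 1 : ℚ[X]) ≠ 0 := by
  rw [← C_1]; exact (monic_X_pow_sub_C (1 : ℚ) hk.ne').ne_zero

lemma adjoinRoot_finrank' (k : ℕ) (hk : 0 < k) :
    Module.finrank ℚ (AdjoinRoot (X ^ k - 1 : ℚ[X])) = k := by
  rw [(AdjoinRoot.powerBasis (adjoinRoot_ne' k hk)).finrank]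
  show (X ^ k - 1 : ℚ[X]).natDegree = k
  rw [← C_1, natDegree_X_pow_sub_C]

lemma adjoinRoot_fd' (k : ℕ) (hk : 0 < k) :
    FiniteDimensional ℚ (AdjoinRoot (X ^ k - 1 : ℚ[X])) :=
  Module.Finite.of_basis (AdjoinRoot.powerBasis (adjoinRoot_ne' k hk)).basis

set_option maxHeartbeats 1000000 in
theorem stmt_4 (n m : ℕ) (hn : 0 < n) (hm : 0 < m) (h : Nat.Coprime n m) :
    (∃ Φ : AdjoinRoot (X ^ n - 1 : ℚ[X]) ⊗[ℚ] AdjoinRoot (X ^ m - 1 : ℚ[X]) →ₐ[ℚ]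
        AdjoinRoot (X ^ (n * m) - 1 : ℚ[X]),
      Φ (AdjoinRoot.root (X ^ n - 1 : ℚ[X]) ⊗ₜ[ℚ] 1) =
          AdjoinRoot.root (X ^ (n * m) - 1 : ℚ[X]) ^ m ∧
        Φ (1 ⊗ₜ[ℚ] AdjoinRoot.root (X ^ m - 1 : ℚ[X])) =
          AdjoinRoot.root (X ^ (n * m) - 1 : ℚ[X]) ^ n) ∧
      ∀ Φ : AdjoinRoot (X ^ n - 1 : ℚ[X]) ⊗[ℚ] AdjoinRoot (X ^ m - 1 : ℚ[X]) →ₐ[ℚ]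
          AdjoinRoot (X ^ (n * m) - 1 : ℚ[X]),
        (Φ (AdjoinRoot.root (X ^ n - 1 : ℚ[X]) ⊗ₜ[ℚ] 1) =
            AdjoinRoot.root (X ^ (n * m) - 1 : ℚ[X]) ^ m ∧
          Φ (1 ⊗ₜ[ℚ] AdjoinRoot.root (X ^ m - 1 : ℚ[X])) =
            AdjoinRoot.root (X ^ (n * m) - 1 : ℚ[X]) ^ n) →
        Function.Bijective Φ := by
  classical
  set z := AdjoinRoot.root (X ^ (n * m) - 1 : ℚ[X]) with hzdef
  have hz : z ^ (n * m) = 1 := by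
    have h0 : (AdjoinRoot.mk (X ^ (n * m) - 1 : ℚ[X])) (X ^ (n * m) - 1) = 0 :=
      AdjoinRoot.mk_self
    rwa [map_sub, map_pow, map_one, AdjoinRoot.mk_X, sub_eq_zero] at h0
  have h1 : aeval (z ^ m) (X ^ n - 1 : ℚ[X]) = 0 := by
    rw [map_sub, map_pow, map_one, aeval_X, ← pow_mul, mul_comm m n, hz, sub_self]
  have h2 : aeval (z ^ n) (X ^ m - 1 : ℚ[X]) = 0 := by
    rw [map_sub, map_pow, map_one, aeval_X, ← pow_mul, hz, sub_self]
  constructor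
  · refine ⟨Algebra.TensorProduct.productMap
      (AdjoinRoot.liftAlgHom _ (Algebra.ofId ℚ _) (z ^ m) h1) (AdjoinRoot.liftAlgHom _ (Algebra.ofId ℚ _) (z ^ n) h2), ?_, ?_⟩
    · simp [Algebra.TensorProduct.productMap_apply_tmul, AdjoinRoot.liftAlgHom_root]
      exact AdjoinRoot.liftAlgHom_root _ _ _ _
    · simp [Algebra.TensorProduct.productMap_apply_tmul, AdjoinRoot.liftAlgHom_root]
      exact AdjoinRoot.liftAlgHom_root _ _ _ _
  · rintro Φ ⟨hΦ1, hΦ2⟩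
    have hzr : z ∈ Φ.range := by
      obtain ⟨a, b, hab⟩ := bezout_mod' n m hn hm h
      have key : (z ^ n) ^ a * (z ^ m) ^ b = z := by
        rw [← pow_mul, ← pow_mul, ← pow_add, pow_eq_pow_of_modEq' hz hab, pow_one]
      refine ⟨(1 ⊗ₜ[ℚ] AdjoinRoot.root (X ^ m - 1 : ℚ[X])) ^ a *
        (AdjoinRoot.root (X ^ n - 1 : ℚ[X]) ⊗ₜ[ℚ] 1) ^ b, ?_⟩
      show Φ _ = z
      rw [map_mul, map_pow, map_pow, hΦ1, hΦ2]
      exact key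
    have hsurj : Function.Surjective Φ := by
      have hrange : Φ.range = ⊤ := by
        rw [eq_top_iff, ← AdjoinRoot.adjoinRoot_eq_top, Algebra.adjoin_le_iff,
          Set.singleton_subset_iff]
        exact hzr
      intro c
      exact (AlgHom.mem_range Φ).1 (hrange ▸ Algebra.mem_top)
    haveI := adjoinRoot_fd' n hn
    haveI := adjoinRoot_fd' m hm
    haveI := adjoinRoot_fd' (n * m) (Nat.mul_pos hn hm)
    have hdim : Module.finrank ℚ (AdjoinRoot (X ^ n - 1 : ℚ[X]) ⊗[ℚ]
        AdjoinRoot (X ^ m - 1 : ℚ[X])) =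
        Module.finrank ℚ (AdjoinRoot (X ^ (n * m) - 1 : ℚ[X])) := by
      rw [Module.finrank_tensorProduct, adjoinRoot_finrank' n hn,
        adjoinRoot_finrank' m hm, adjoinRoot_finrank' (n * m) (Nat.mul_pos hn hm)]
    have hinj : Function.Injective Φ :=
      (LinearMap.injective_iff_surjective_of_finrank_eq_finrank
        (f := Φ.toLinearMap) hdim).2 hsurj
    exact ⟨hinj, hsurj⟩
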